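/- The induction principle for finite F: let P be the free algebra on x satisfying Σ, assume <_L is an irreflexive linear order extending the relations of Theorem 1, and let F ⊆ P be finite and S ⊆ P nonempty. Then there is w ∈ S such that for all u ∈ P, if p·u ≤_L w for some p ∈ F, then u ∉ S. -/
import Mathlib


/-- Terms in one generator x with binary operations · and ∘. -/
inductive STerm : Type
  | x : STerm
  | mul : STerm → STerm → STerm
  | comp : STerm → STerm → STerm

/-- The congruence generated by the laws Σ. -/
inductive SEq : STerm → STerm → Prop
  | assoc (a b c : STerm) :
      SEq (STerm.comp a (STerm.comp b c)) (STerm.comp (STerm.comp a b) c)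
  | mix (a b c : STerm) :
      SEq (STerm.mul (STerm.comp a b) c) (STerm.mul a (STerm.mul b c))
  | dist (a b c : STerm) :
      SEq (STerm.mul a (STerm.comp b c)) (STerm.comp (STerm.mul a b) (STerm.mul a c))
  | abs (a b : STerm) :
      SEq (STerm.comp a b) (STerm.comp (STerm.mul a b) a)
  | refl (a : STerm) : SEq a a
  | symm {a b : STerm} : SEq a b → SEq b a
  | trans {a b c : STerm} : SEq a b → SEq b c → SEq a c
  | congrMul {a b c d : STerm} : SEq a b → SEq c d → SEq (STerm.mul a c) (STerm.mul b d)
  | congrComp {a b c d : STerm} : SEq a b → SEq c d → SEq (STerm.comp a c) (STerm.comp b d)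

instance STerm.setoid : Setoid STerm := ⟨SEq, SEq.refl, SEq.symm, SEq.trans⟩

/-- The free algebra P on one generator x satisfying the laws Σ. -/
def FreeSig : Type := Quotient STerm.setoid

def FreeSig.mul : FreeSig → FreeSig → FreeSig :=
  Quotient.map₂ STerm.mul fun _ _ h _ _ h' => SEq.congrMul h h'

def FreeSig.comp : FreeSig → FreeSig → FreeSig :=
  Quotient.map₂ STerm.comp fun _ _ h _ _ h' => SEq.congrComp h h'

/-- a <_L b : b = a·c₀·...·c_{n-1} ∗ c_n with ∗ ∈ {·, ∘}, left association. -/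
def FreeSig.ltL (r s : FreeSig) : Prop :=
  ∃ (l : List FreeSig) (a : FreeSig),
    s = FreeSig.mul (List.foldl FreeSig.mul r l) a ∨
    s = FreeSig.comp (List.foldl FreeSig.mul r l) a

/-- a ≤_L b. -/
def FreeSig.leL (r s : FreeSig) : Prop := FreeSig.ltL r s ∨ r = s

/-- Composition powers p^m = p∘p∘...∘p (m times); value at 0 is a dummy. -/
def FreeSig.compPow (p : FreeSig) : ℕ → FreeSig
  | 0 => p
  | 1 => p
  | n + 2 => FreeSig.comp p (FreeSig.compPow p (n + 1))

/-- Dot powers p^(0) = p, p^(n+1) = p·p^(n). -/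
def FreeSig.dotPow (p : FreeSig) : ℕ → FreeSig
  | 0 => p
  | n + 1 => FreeSig.mul p (FreeSig.dotPow p n)


/-- Left self-distributivity of · , derived from mix and abs:
    a·(b·c) = ((a∘b))·c = ((a·b)∘a)·c = (a·b)·(a·c). -/
lemma FreeSig.ld_eq (a b c : FreeSig) :
    FreeSig.mul a (FreeSig.mul b c) = FreeSig.mul (FreeSig.mul a b) (FreeSig.mul a c) := by
  refine Quotient.inductionOn₃ a b c fun a b c => ?_
  exact Quotient.sound (((SEq.mix a b c).symm.trans
    (SEq.congrMul (SEq.abs a b) (SEq.refl c))).trans (SEq.mix (STerm.mul a b) a c))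

/-- Distributivity as an equality in the quotient. -/
lemma FreeSig.dist_eq (a b c : FreeSig) :
    FreeSig.mul a (FreeSig.comp b c) = FreeSig.comp (FreeSig.mul a b) (FreeSig.mul a c) := by
  refine Quotient.inductionOn₃ a b c fun a b c => ?_
  exact Quotient.sound (SEq.dist a b c)

/-- Multiplying a left-associated product on the left, via left self-distributivity. -/
lemma FreeSig.mul_foldl (c : FreeSig) : ∀ (l : List FreeSig) (a : FreeSig),
    FreeSig.mul c (List.foldl FreeSig.mul a l) =
      List.foldl FreeSig.mul (FreeSig.mul c a) (l.map (FreeSig.mul c)) := by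
  intro l
  induction l with
  | nil => intro a; rfl
  | cons d l ih =>
      intro a
      simp only [List.foldl, List.map]
      rw [ih, FreeSig.ld_eq]

/-- a <_L a·b. -/
lemma FreeSig.lt_mul (a b : FreeSig) : FreeSig.ltL a (FreeSig.mul a b) :=
  ⟨[], b, Or.inl rfl⟩

/-- Left multiplication is monotone for <_L. -/
lemma FreeSig.mul_mono (c : FreeSig) {a b : FreeSig} (h : FreeSig.ltL a b) :
    FreeSig.ltL (FreeSig.mul c a) (FreeSig.mul c b) := by
  obtain ⟨l, d, h | h⟩ := h
  · exact ⟨l.map (FreeSig.mul c), FreeSig.mul c d,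
      Or.inl (by rw [h, FreeSig.ld_eq, FreeSig.mul_foldl])⟩
  · exact ⟨l.map (FreeSig.mul c), FreeSig.mul c d,
      Or.inr (by rw [h, FreeSig.dist_eq, FreeSig.mul_foldl])⟩

lemma FreeSig.mul_mono_le (c : FreeSig) {a b : FreeSig} (h : FreeSig.leL a b) :
    FreeSig.leL (FreeSig.mul c a) (FreeSig.mul c b) := by
  rcases h with h | rfl
  · exact Or.inl (FreeSig.mul_mono c h)
  · exact Or.inr rfl

/-- The induction principle: if F ⊆ P is finite and S ⊆ P is nonempty then there is
w ∈ S such that for all u, if p·u ≤_L w for some p ∈ F, then u ∉ S.  (Assuming <_L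
is an irreflexive linear order, p^m <_L p^(m) for m ≥ 1, and Theorem 1(iii): the
dot powers p^(n) eventually dominate any fixed element.) -/
theorem FreeSig.induction_principle
    (hirr : ∀ a : FreeSig, ¬ FreeSig.ltL a a)
    (htrans : ∀ a b c : FreeSig, FreeSig.ltL a b → FreeSig.ltL b c → FreeSig.ltL a c)
    (htri : ∀ a b : FreeSig, FreeSig.ltL a b ∨ a = b ∨ FreeSig.ltL b a)
    (hpow : ∀ (p : FreeSig) (m : ℕ), 1 ≤ m →
      FreeSig.ltL (FreeSig.compPow p m) (FreeSig.dotPow p m))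
    (hdom : ∀ p q : FreeSig, ∃ n : ℕ, FreeSig.ltL q (FreeSig.dotPow p n)) :
    ∀ (F S : Set FreeSig), F.Finite → S.Nonempty →
      ∃ w ∈ S, ∀ u p : FreeSig, p ∈ F → FreeSig.leL (FreeSig.mul p u) w → u ∉ S := by
  classical
  intro F S hF hS
  -- basic mixed transitivity facts
  have le_lt_trans : ∀ {a b c : FreeSig}, FreeSig.leL a b → FreeSig.ltL b c → FreeSig.ltL a c := by
    rintro a b c (h | rfl) h2
    exacts [htrans _ _ _ h h2, h2]
  have lt_le_trans : ∀ {a b c : FreeSig}, FreeSig.ltL a b → FreeSig.leL b c → FreeSig.ltL a c := by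
    rintro a b c h1 (h | rfl)
    exacts [htrans _ _ _ h1 h, h1]
  have le_trans' : ∀ {a b c : FreeSig}, FreeSig.leL a b → FreeSig.leL b c → FreeSig.leL a c := by
    rintro a b c h1 (h | rfl)
    · exact Or.inl (le_lt_trans h1 h)
    · exact h1
  -- key fact: b <_L a·b, via hdom and trichotomy
  have b_lt_mul : ∀ a b : FreeSig, FreeSig.ltL b (FreeSig.mul a b) := by
    intro a b
    rcases htri a b with hab | rfl | hba
    · by_contra hnot
      have hle : FreeSig.leL (FreeSig.mul a b) b := by
        rcases htri (FreeSig.mul a b) b with h | h | h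
        exacts [Or.inl h, Or.inr h, absurd h hnot]
      have hn : ∀ n, FreeSig.leL (FreeSig.dotPow a n) b := by
        intro n
        induction n with
        | zero => exact Or.inl hab
        | succ n ih =>
            exact le_trans' (FreeSig.mul_mono_le a ih) hle
      obtain ⟨n, hn'⟩ := hdom a b
      rcases hn n with h | h
      · exact hirr _ (htrans _ _ _ hn' h)
      · exact hirr b (h ▸ hn')
    · exact FreeSig.lt_mul a a
    · exact htrans _ _ _ hba (FreeSig.lt_mul a b)
  -- reflection: c·a <_L c·b implies a <_L b
  have refl_lt : ∀ (c : FreeSig) {a b : FreeSig},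
      FreeSig.ltL (FreeSig.mul c a) (FreeSig.mul c b) → FreeSig.ltL a b := by
    intro c a b h
    rcases htri a b with h' | rfl | h'
    · exact h'
    · exact absurd h (hirr _)
    · exact absurd (htrans _ _ _ h (FreeSig.mul_mono c h')) (hirr _)
  -- the measure: least n with w <_L p^(n)
  set N : FreeSig → FreeSig → ℕ := fun p w => Nat.find (hdom p w) with hN
  have Nspec : ∀ p w, FreeSig.ltL w (FreeSig.dotPow p (N p w)) := fun p w => Nat.find_spec (hdom p w)
  have Nmin : ∀ p w n, FreeSig.ltL w (FreeSig.dotPow p n) → N p w ≤ n :=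
    fun p w n h => Nat.find_min' (hdom p w) h
  set μ : FreeSig → ℕ := fun w => ∑ p ∈ hF.toFinset, N p w with hμ
  -- the measure drops along divisions
  have key : ∀ w u p : FreeSig, p ∈ F → FreeSig.leL (FreeSig.mul p u) w → μ u < μ w := by
    intro w u p hp hle
    have huw : FreeSig.ltL u w := lt_le_trans (b_lt_mul p u) hle
    have hle2 : ∀ q, N q u ≤ N q w := fun q => Nmin q u _ (htrans _ _ _ huw (Nspec q w))
    have hlt : N p u < N p w := by
      have hpu : FreeSig.ltL (FreeSig.mul p u) (FreeSig.dotPow p (N p w)) :=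
        le_lt_trans hle (Nspec p w)
      rcases hm : N p w with _ | m
      · rw [hm] at hpu
        exact absurd (htrans _ _ _ (FreeSig.lt_mul p u) hpu) (hirr _)
      · rw [hm] at hpu
        have hu2 : FreeSig.ltL u (FreeSig.dotPow p m) := refl_lt p hpu
        have := Nmin p u m hu2
        omega
    refine Finset.sum_lt_sum (fun q _ => hle2 q) ⟨p, hF.mem_toFinset.mpr hp, hlt⟩
  -- pick a μ-minimal element of S
  have hne : (μ '' S).Nonempty := hS.image μ
  obtain ⟨w, hwS, hwmin⟩ : ∃ w ∈ S, μ w = sInf (μ '' S) := Nat.sInf_mem hne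
  refine ⟨w, hwS, ?_⟩
  intro u p hp hle hu
  have h1 : μ u < μ w := key w u p hp hle
  have h2 : sInf (μ '' S) ≤ μ u := Nat.sInf_le ⟨u, hu, rfl⟩
  omega
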